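/- Let R be an abelian semi-regular ring with J(R) nilpotent. Then the Laurent series ring R[[x, x⁻¹]] is McCoy over R: whenever f, g are non-zero formal Laurent series over R with f g = 0, there exists a non-zero element c ∈ R with f · c = 0, and there exists a non-zero element d ∈ R with d · g = 0. -/

import Mathlib

/-- A ring is *abelian* if every idempotent is central. -/
def IsAbelianRing (R : Type*) [Ring R] : Prop :=
  ∀ e : R, IsIdempotentElem e → ∀ a : R, e * a = a * e

/-- A ring `R` is *semi-regular* if `R/J(R)` is von Neumann regular (for every `a` there is
`b` with `a - a*b*a ∈ J(R)`) and idempotents lift modulo the Jacobson radical `J(R)`. -/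
def IsSemiregularRing (R : Type*) [Ring R] : Prop :=
  (∀ a : R, ∃ b : R, a - a * b * a ∈ (⊥ : Ideal R).jacobson) ∧
  ∀ a : R, a * a - a ∈ (⊥ : Ideal R).jacobson →
    ∃ e : R, IsIdempotentElem e ∧ e - a ∈ (⊥ : Ideal R).jacobson

/-- The Jacobson radical `J(R)` is nilpotent: there is `n > 0` such that every product of `n`
elements of `J(R)` vanishes (i.e. `J(R)^n = 0`). -/
def JacobsonNilpotent (R : Type*) [Ring R] : Prop :=
  ∃ n : ℕ, 0 < n ∧ ∀ l : List R, l.length = n →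
    (∀ x ∈ l, x ∈ (⊥ : Ideal R).jacobson) → l.prod = 0


section Jac
variable {R : Type*} [Ring R]



private theorem jac_char {x : R} :
    x ∈ (⊥ : Ideal R).jacobson ↔ ∀ y : R, ∃ z : R, z * (y * x) + z = 1 := by
  rw [Ideal.mem_jacobson_iff]
  constructor
  · intro h y
    obtain ⟨z, hz⟩ := h y
    refine ⟨z, ?_⟩
    rw [Ideal.mem_bot, sub_eq_zero] at hz
    rw [← mul_assoc]; exact hz
  · intro h y
    obtain ⟨z, hz⟩ := h y
    refine ⟨z, ?_⟩
    rw [Ideal.mem_bot, sub_eq_zero, mul_assoc]; exact hz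

private theorem jac_left_inv {x : R} (hx : x ∈ (⊥ : Ideal R).jacobson) : ∃ z : R, z * (1 - x) = 1 := by
  obtain ⟨z, hz⟩ := jac_char.1 hx (-1)
  refine ⟨z, ?_⟩
  calc z * (1 - x) = z * ((-1) * x) + z := by noncomm_ring
  _ = 1 := hz

private theorem jac_isUnit_one_sub {x : R} (hx : x ∈ (⊥ : Ideal R).jacobson) : IsUnit (1 - x) := by
  obtain ⟨z, hz⟩ := jac_left_inv hx
  have hzx : -(z * x) ∈ (⊥ : Ideal R).jacobson := neg_mem (Ideal.mul_mem_left _ z hx)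
  obtain ⟨w, hw⟩ := jac_left_inv hzx
  have hwz : w * z = 1 := by
    have hz' : z - z * x = 1 := by
      have e : z * (1 - x) = z - z * x := by noncomm_ring
      rw [e] at hz; exact hz
    have h1 : (1 : R) - -(z * x) = z := by
      rw [sub_neg_eq_add, ← hz']; noncomm_ring
    rw [h1] at hw; exact hw
  have hw_eq : w = 1 - x := by
    calc w = w * (z * (1 - x)) := by rw [hz, mul_one]
    _ = (w * z) * (1 - x) := by rw [mul_assoc]
    _ = 1 - x := by rw [hwz, one_mul]
  exact ⟨⟨1 - x, z, by rw [← hw_eq]; exact hwz, hz⟩, rfl⟩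

private theorem jac_mul_right {x : R} (hx : x ∈ (⊥ : Ideal R).jacobson) (r : R) : x * r ∈ (⊥ : Ideal R).jacobson := by
  rw [jac_char]
  intro y
  have hryx : -(r * y * x) ∈ (⊥ : Ideal R).jacobson :=
    neg_mem (Ideal.mul_mem_left _ _ hx)
  obtain ⟨z, hz⟩ := jac_left_inv hryx
  have hz' : z * (1 + r * y * x) = 1 := by
    have e : (1 : R) - -(r * y * x) = 1 + r * y * x := by noncomm_ring
    rw [e] at hz; exact hz
  refine ⟨1 - y * x * z * r, ?_⟩
  have expand : (1 - y * x * z * r) * (y * (x * r)) + (1 - y * x * z * r)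
      = 1 + y * x * r - y * x * (z * (1 + r * y * x)) * r := by noncomm_ring
  rw [expand, hz']
  noncomm_ring

end Jac


section Decomp
variable {R : Type*} [Ring R]

private theorem idem_jac_eq_zero {m : ℕ} (hm : 0 < m)
    (hnil : ∀ l : List R, l.length = m →
      (∀ x ∈ l, x ∈ (⊥ : Ideal R).jacobson) → l.prod = 0)
    {E : R} (hE : IsIdempotentElem E) (hEJ : E ∈ (⊥ : Ideal R).jacobson) : E = 0 := by
  have h := hnil (List.replicate m E) List.length_replicate
    (by intro x hx; rw [List.eq_of_mem_replicate hx]; exact hEJ)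
  rw [List.prod_replicate] at h
  obtain ⟨m', rfl⟩ := Nat.exists_eq_add_of_lt hm
  rw [zero_add, hE.pow_succ_eq] at h
  exact h

private theorem decomp (hab : IsAbelianRing R) (hsr : IsSemiregularRing R)
    {m : ℕ} (hm : 0 < m)
    (hnil : ∀ l : List R, l.length = m →
      (∀ x ∈ l, x ∈ (⊥ : Ideal R).jacobson) → l.prod = 0)
    (a : R) :
    ∃ E u v z : R, IsIdempotentElem E ∧ (∀ r, E * r = r * E) ∧ v * u = 1 ∧ u * v = 1 ∧
      z ∈ (⊥ : Ideal R).jacobson ∧ a = E * u + z ∧ (a = 0 → E = 0) := by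
  classical
  obtain ⟨b, hj1⟩ := hsr.1 a
  -- a*b is idempotent mod J
  have habJ : (a*b)*(a*b) - a*b ∈ (⊥ : Ideal R).jacobson := by
    have e : (a*b)*(a*b) - a*b = -((a - a*b*a) * b) := by noncomm_ring
    rw [e]; exact neg_mem (jac_mul_right hj1 b)
  obtain ⟨E, hEidem, hEj⟩ := hsr.2 (a*b) habJ
  have hEc : ∀ r, E * r = r * E := hab E hEidem
  have hs1 : E*E - E = 0 := by rw [hEidem.eq, sub_self]
  have hs2 : E*a - a*E = 0 := by rw [hEc a, sub_self]
  have hs3 : E*b - b*E = 0 := by rw [hEc b, sub_self]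
  -- b*a is idempotent mod J
  have hbaJ : (b*a)*(b*a) - b*a ∈ (⊥ : Ideal R).jacobson := by
    have e : (b*a)*(b*a) - b*a = -(b * (a - a*b*a)) := by noncomm_ring
    rw [e]; exact neg_mem (Ideal.mul_mem_left _ b hj1)
  obtain ⟨F, hFidem, hFj⟩ := hsr.2 (b*a) hbaJ
  have hFc : ∀ r, F * r = r * F := hab F hFidem
  have hf5 : F*b - b*F = 0 := by rw [hFc b, sub_self]
  -- a*b ≡ b*a mod J
  have hw : b*(b*a) - (b*a)*b ∈ (⊥ : Ideal R).jacobson := by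
    have e : b*(b*a) - (b*a)*b
        = b*((b*a) - F) + (F - (b*a))*b + (-1 : R) * (F*b - b*F) := by noncomm_ring
    rw [e, hf5]
    simpa using add_mem (Ideal.mul_mem_left _ b (neg_mem hFj))
      (jac_mul_right hFj b)
  have hs2' : (a*b)*(b*a) - a*b ∈ (⊥ : Ideal R).jacobson := by
    have e : (a*b)*(b*a) - a*b = a*(b*(b*a) - (b*a)*b) + (-(a - a*b*a))*b := by noncomm_ring
    rw [e]
    exact add_mem (Ideal.mul_mem_left _ a hw) (jac_mul_right (neg_mem hj1) b)
  have hwp : a*(a*b) - (a*b)*a ∈ (⊥ : Ideal R).jacobson := by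
    have e : a*(a*b) - (a*b)*a
        = a*((a*b) - E) + (E - (a*b))*a + (-1 : R) * (E*a - a*E) := by noncomm_ring
    rw [e, hs2]
    simpa using add_mem (Ideal.mul_mem_left _ a (neg_mem hEj)) (jac_mul_right hEj a)
  have hs3' : (b*a)*(a*b) - b*a ∈ (⊥ : Ideal R).jacobson := by
    have e : (b*a)*(a*b) - b*a
        = b*(a*(a*b) - (a*b)*a) + (-(b*(a - a*b*a))) := by noncomm_ring
    rw [e]
    exact add_mem (Ideal.mul_mem_left _ b hwp) (neg_mem (Ideal.mul_mem_left _ b hj1))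
  have hs4 : (a*b)*(b*a) - (b*a)*(a*b) ∈ (⊥ : Ideal R).jacobson := by
    have e : (a*b)*(b*a) - (b*a)*(a*b)
        = ((a*b) - E)*(b*a) + (b*a)*(E - (a*b)) + (E*b - b*E)*a + b*(E*a - a*E) := by
      noncomm_ring
    rw [e, hs2, hs3]
    simpa using add_mem (jac_mul_right (neg_mem hEj) (b*a)) (Ideal.mul_mem_left _ (b*a) hEj)
  have hL5 : a*b - b*a ∈ (⊥ : Ideal R).jacobson := by
    have e : a*b - b*a = -((a*b)*(b*a) - a*b) + ((a*b)*(b*a) - (b*a)*(a*b))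
        + ((b*a)*(a*b) - b*a) := by noncomm_ring
    rw [e]
    exact add_mem (add_mem (neg_mem hs2') hs4) hs3'
  -- the unit and the error term
  set u : R := a + 1 - E with hu
  set v' : R := b*E + 1 - E with hv'
  have m1 : u * v' - 1 ∈ (⊥ : Ideal R).jacobson := by
    have e : u * v' - 1 = -((E - a*b)*E) + ((a - a*b*a) + ((a*b) - E)*a)
        + (-1 : R) * ((E*b - b*E)*E) + 2*(E*E - E) + (E*a - a*E) + (-(b*(E*E - E))) := by
      rw [hu, hv']; noncomm_ring
    rw [e, hs1, hs2, hs3]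
    simpa using add_mem (neg_mem (jac_mul_right hEj E))
      (add_mem hj1 (jac_mul_right (neg_mem hEj) a))
  have m2 : v' * u - 1 ∈ (⊥ : Ideal R).jacobson := by
    have e : v' * u - 1 = ((b*a - a*b)*E + (-((E - a*b)*E)) + (a - a*b*a) + ((a*b) - E)*a)
        + (b*(E*a - a*E)) + (-(b*(E*E - E))) + 2*(E*E - E) := by
      rw [hu, hv']; noncomm_ring
    rw [e, hs1, hs2]
    simpa using add_mem (add_mem (add_mem (jac_mul_right (neg_mem hL5) E)
      (neg_mem (jac_mul_right hEj E))) hj1) (jac_mul_right (neg_mem hEj) a)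
  -- u is a unit
  obtain ⟨w1, hw1l, hw1r⟩ : ∃ w, w * (u * v') = 1 ∧ (u * v') * w = 1 := by
    have hU : IsUnit (1 - -(u * v' - 1)) := jac_isUnit_one_sub (neg_mem m1)
    have e : (1 : R) - -(u * v' - 1) = u * v' := by noncomm_ring
    rw [e] at hU
    obtain ⟨p, hp⟩ := hU
    exact ⟨p.inv, by rw [← hp]; exact p.inv_val, by rw [← hp]; exact p.val_inv⟩
  obtain ⟨w2, hw2l, hw2r⟩ : ∃ w, w * (v' * u) = 1 ∧ (v' * u) * w = 1 := by
    have hU : IsUnit (1 - -(v' * u - 1)) := jac_isUnit_one_sub (neg_mem m2)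
    have e : (1 : R) - -(v' * u - 1) = v' * u := by noncomm_ring
    rw [e] at hU
    obtain ⟨p, hp⟩ := hU
    exact ⟨p.inv, by rw [← hp]; exact p.inv_val, by rw [← hp]; exact p.val_inv⟩
  -- v := v' * w1 ... : we need v*u = 1 and u*v = 1.
  -- u has left inverse (w2*v') and right inverse (v'*w1); hence they are equal.
  have hleft : (w2 * v') * u = 1 := by rw [mul_assoc]; exact hw2l
  have hright : u * (v' * w1) = 1 := by rw [← mul_assoc]; exact hw1r
  have heq : w2 * v' = v' * w1 := by
    calc w2 * v' = (w2 * v') * (u * (v' * w1)) := by rw [hright, mul_one]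
    _ = ((w2 * v') * u) * (v' * w1) := by noncomm_ring
    _ = v' * w1 := by rw [hleft, one_mul]
  refine ⟨E, u, v' * w1, a - E * u, hEidem, hEc, ?_, hright, ?_, by noncomm_ring, ?_⟩
  · rw [← heq]; exact hleft
  · have e : a - E * u = (a - a*b*a) + ((a*b) - E)*a + (E*E - E) := by
      rw [hu]; noncomm_ring
    rw [e, hs1]
    simpa using add_mem hj1 (jac_mul_right (neg_mem hEj) a)
  · intro ha
    apply idem_jac_eq_zero hm hnil hEidem
    have : E - a*b ∈ (⊥ : Ideal R).jacobson := hEj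
    rw [ha] at this
    simpa using this

end Decomp


section Jp
variable {R : Type*} [Ring R]

private def Jpow (R : Type*) [Ring R] (k : ℕ) : Ideal R :=
  Ideal.span {x | ∃ (l : List R) (s : R), l.length = k ∧
    (∀ y ∈ l, y ∈ (⊥ : Ideal R).jacobson) ∧ x = l.prod * s}

private theorem Jpow_zero (x : R) : x ∈ Jpow R 0 :=
  Ideal.subset_span ⟨[], x, rfl, by simp, by simp⟩

private theorem Jpow_top_eq_zero {m : ℕ}
    (hnil : ∀ l : List R, l.length = m →
      (∀ x ∈ l, x ∈ (⊥ : Ideal R).jacobson) → l.prod = 0)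
    {x : R} (hx : x ∈ Jpow R m) : x = 0 := by
  have : Jpow R m ≤ ⊥ := by
    rw [Jpow, Ideal.span_le]
    rintro y ⟨l, s, hlen, hmem, rfl⟩
    rw [hnil l hlen hmem, zero_mul]
    exact Submodule.zero_mem _
  simpa using this hx

private theorem Jpow_left_mul {k : ℕ} {x : R} (hx : x ∈ Jpow R k) :
    ∀ z ∈ (⊥ : Ideal R).jacobson, z * x ∈ Jpow R (k + 1) := by
  refine Submodule.span_induction ?_ ?_ ?_ ?_ hx
  · rintro y ⟨l, s, hlen, hmem, rfl⟩ w hw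
    refine Ideal.subset_span ⟨w :: l, s, by simp [hlen], ?_, by rw [List.prod_cons, mul_assoc]⟩
    intro t ht
    rcases List.mem_cons.1 ht with h | h
    · exact h ▸ hw
    · exact hmem t h
  · intro w hw; rw [mul_zero]; exact Submodule.zero_mem _
  · intro p q hp hq ihp ihq w hw
    rw [mul_add]; exact Submodule.add_mem _ (ihp w hw) (ihq w hw)
  · intro r p hp ihp w hw
    rw [smul_eq_mul, ← mul_assoc]
    exact ihp (w * r) (jac_mul_right hw r)

private theorem Jpow_mul_right {k : ℕ} {x : R} (hx : x ∈ Jpow R k) (r : R) :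
    x * r ∈ Jpow R k := by
  induction hx using Submodule.span_induction with
  | mem y hy =>
    obtain ⟨l, s, hlen, hmem, rfl⟩ := hy
    exact Ideal.subset_span ⟨l, s * r, hlen, hmem, by rw [mul_assoc]⟩
  | zero => rw [zero_mul]; exact Submodule.zero_mem _
  | add p q hp hq ihp ihq => rw [add_mul]; exact Submodule.add_mem _ ihp ihq
  | smul c p hp ihp => rw [smul_eq_mul, mul_assoc]; exact Ideal.mul_mem_left _ _ ihp

private theorem Jpow_mul_right_jac {k : ℕ} {x : R} (hx : x ∈ Jpow R k) :
    ∀ z ∈ (⊥ : Ideal R).jacobson, x * z ∈ Jpow R (k + 1) := by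
  induction hx using Submodule.span_induction with
  | mem y hy =>
    obtain ⟨l, s, hlen, hmem, rfl⟩ := hy
    intro w hw
    refine Ideal.subset_span ⟨l ++ [s * w], 1, by simp [hlen], ?_, ?_⟩
    · intro t ht
      rcases List.mem_append.1 ht with h | h
      · exact hmem t h
      · rw [List.mem_singleton.1 h]; exact Ideal.mul_mem_left _ _ hw
    · rw [List.prod_append, List.prod_singleton, mul_one, mul_assoc]
  | zero => intro w hw; rw [zero_mul]; exact Submodule.zero_mem _
  | add p q hp hq ihp ihq => intro w hw; rw [add_mul]; exact Submodule.add_mem _ (ihp w hw) (ihq w hw)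
  | smul c p hp ihp =>
    intro w hw
    rw [smul_eq_mul, mul_assoc]
    exact Ideal.mul_mem_left _ _ (ihp w hw)

end Jp


open Finset in
private theorem good_aux {R : Type*} [Ring R] (f h : HahnSeries ℤ R)
    (hrel : ∀ n : ℤ, ∑ ij ∈ Finset.addAntidiagonal f.isPWO_support h.isPWO_support n,
      f.coeff ij.1 * h.coeff ij.2 = 0)
    (I : Ideal R) (E u v z : R → R)
    (hidem : ∀ a, E a * E a = E a)
    (hcent : ∀ a r, E a * r = r * E a)
    (hvu : ∀ a, v a * u a = 1)
    (hdec : ∀ a, a = E a * u a + z a)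
    (hE0 : E 0 = 0)
    (hzh : ∀ i j : ℤ, z (f.coeff i) * h.coeff j ∈ I)
    (i j : ℤ) :
    E (f.coeff i) * h.coeff j ∈ I ∧ f.coeff i * h.coeff j ∈ I := by
  by_cases hfi : f.coeff i = 0
  · rw [hfi, hE0]
    exact ⟨by rw [zero_mul]; exact zero_mem I, by rw [zero_mul]; exact zero_mem I⟩
  by_cases hhj : h.coeff j = 0
  · rw [hhj]
    exact ⟨by rw [mul_zero]; exact zero_mem I, by rw [mul_zero]; exact zero_mem I⟩
  have hiS : i ∈ f.support := hfi
  have hjS : j ∈ h.support := hhj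
  have hfo : f.order ≤ i := HahnSeries.order_le_of_coeff_ne_zero hfi
  have hho : h.order ≤ j := HahnSeries.order_le_of_coeff_ne_zero hhj
  have hmem : (i, j) ∈ Finset.addAntidiagonal f.isPWO_support h.isPWO_support (i + j) :=
    Finset.mem_addAntidiagonal.2 ⟨hiS, hjS, rfl⟩
  have herase : ∀ p ∈ (Finset.addAntidiagonal f.isPWO_support h.isPWO_support (i + j)).erase (i, j),
      E (f.coeff i) * (f.coeff p.1 * h.coeff p.2) ∈ I := by
    intro p hp
    have hpS := Finset.mem_of_mem_erase hp
    have hpne := Finset.ne_of_mem_erase hp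
    obtain ⟨hp1, hp2, hpsum⟩ := Finset.mem_addAntidiagonal.1 hpS
    have hp1o : f.order ≤ p.1 := HahnSeries.order_le_of_coeff_ne_zero hp1
    have hp2o : h.order ≤ p.2 := HahnSeries.order_le_of_coeff_ne_zero hp2
    rcases lt_trichotomy p.1 i with hlt | heq | hgt
    · have IH := (good_aux f h hrel I E u v z hidem hcent hvu hdec hE0 hzh p.1 p.2).2
      exact Ideal.mul_mem_left _ _ IH
    · exfalso
      apply hpne
      have : p.2 = j := by omega
      exact Prod.ext heq this
    · have hp2lt : p.2 < j := by omega
      have IH := (good_aux f h hrel I E u v z hidem hcent hvu hdec hE0 hzh i p.2).1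
      have e : E (f.coeff i) * (f.coeff p.1 * h.coeff p.2)
          = f.coeff p.1 * (E (f.coeff i) * h.coeff p.2) := by
        rw [← mul_assoc, hcent, mul_assoc]
      rw [e]
      exact Ideal.mul_mem_left _ _ IH
  have hEa : E (f.coeff i) * (f.coeff i * h.coeff j) ∈ I := by
    have hsum0 : ∑ p ∈ Finset.addAntidiagonal f.isPWO_support h.isPWO_support (i + j),
        E (f.coeff i) * (f.coeff p.1 * h.coeff p.2) = 0 := by
      rw [← Finset.mul_sum, hrel (i + j), mul_zero]
    have hsplit := Finset.add_sum_erase _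
      (fun p : ℤ × ℤ => E (f.coeff i) * (f.coeff p.1 * h.coeff p.2)) hmem
    rw [hsum0] at hsplit
    have h2 : E (f.coeff i) * (f.coeff i * h.coeff j)
        = - ∑ p ∈ (Finset.addAntidiagonal f.isPWO_support h.isPWO_support (i + j)).erase (i, j),
            E (f.coeff i) * (f.coeff p.1 * h.coeff p.2) := by
      simpa using eq_neg_of_add_eq_zero_left hsplit
    rw [h2]
    exact neg_mem (Submodule.sum_mem _ herase)
  -- decompose a_i
  set Ei := E (f.coeff i) with hEidef
  set ui := u (f.coeff i) with huidef
  set vi := v (f.coeff i) with hvidef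
  set zi := z (f.coeff i) with hzidef
  have hd : f.coeff i = Ei * ui + zi := hdec _
  have hzmem : Ei * (zi * h.coeff j) ∈ I := Ideal.mul_mem_left _ _ (hzh i j)
  have hEuh : Ei * ui * h.coeff j ∈ I := by
    have e : Ei * ui * h.coeff j
        = Ei * (f.coeff i * h.coeff j) - Ei * (zi * h.coeff j) := by
      rw [hd]
      have : Ei * ((Ei * ui + zi) * h.coeff j)
          = Ei * Ei * ui * h.coeff j + Ei * (zi * h.coeff j) := by noncomm_ring
      rw [this, hidem]
      noncomm_ring
    rw [e]
    exact sub_mem hEa hzmem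
  have hEh : Ei * h.coeff j ∈ I := by
    have e : Ei * h.coeff j = vi * (Ei * ui * h.coeff j) := by
      have h1 : ui * (Ei * h.coeff j) = Ei * ui * h.coeff j := by
        rw [← mul_assoc, ← hcent]
      rw [← h1, ← mul_assoc, ← mul_assoc, hvu, one_mul]
    rw [e]
    exact Ideal.mul_mem_left _ _ hEuh
  refine ⟨hEh, ?_⟩
  have e : f.coeff i * h.coeff j = Ei * ui * h.coeff j + zi * h.coeff j := by
    rw [hd]; noncomm_ring
  rw [e]
  exact add_mem hEuh (hzh i j)
termination_by ((i + j - (f.order + h.order)).toNat, (i - f.order).toNat)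
decreasing_by
  · apply Prod.Lex.right' <;> omega
  · apply Prod.Lex.left; omega


private theorem good_aux2 {R : Type*} [Ring R] (h g : HahnSeries ℤ R)
    (hrel : ∀ n : ℤ, ∑ ij ∈ Finset.addAntidiagonal h.isPWO_support g.isPWO_support n,
      h.coeff ij.1 * g.coeff ij.2 = 0)
    (I : Ideal R) (E u v z : R → R)
    (hidem : ∀ a, E a * E a = E a)
    (hcent : ∀ a r, E a * r = r * E a)
    (huv : ∀ a, u a * v a = 1)
    (hdec : ∀ a, a = E a * u a + z a)
    (hE0 : E 0 = 0)
    (hIr : ∀ x ∈ I, ∀ r : R, x * r ∈ I)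
    (hzh : ∀ i j : ℤ, h.coeff i * z (g.coeff j) ∈ I)
    (i j : ℤ) :
    h.coeff i * E (g.coeff j) ∈ I ∧ h.coeff i * g.coeff j ∈ I := by
  by_cases hgj : g.coeff j = 0
  · rw [hgj, hE0]
    exact ⟨by rw [mul_zero]; exact zero_mem I, by rw [mul_zero]; exact zero_mem I⟩
  by_cases hhi : h.coeff i = 0
  · rw [hhi]
    exact ⟨by rw [zero_mul]; exact zero_mem I, by rw [zero_mul]; exact zero_mem I⟩
  have hiS : i ∈ h.support := hhi
  have hjS : j ∈ g.support := hgj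
  have hho : h.order ≤ i := HahnSeries.order_le_of_coeff_ne_zero hhi
  have hgo : g.order ≤ j := HahnSeries.order_le_of_coeff_ne_zero hgj
  have hmem : (i, j) ∈ Finset.addAntidiagonal h.isPWO_support g.isPWO_support (i + j) :=
    Finset.mem_addAntidiagonal.2 ⟨hiS, hjS, rfl⟩
  have herase : ∀ p ∈ (Finset.addAntidiagonal h.isPWO_support g.isPWO_support (i + j)).erase (i, j),
      (h.coeff p.1 * g.coeff p.2) * E (g.coeff j) ∈ I := by
    intro p hp
    have hpS := Finset.mem_of_mem_erase hp
    have hpne := Finset.ne_of_mem_erase hp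
    obtain ⟨hp1, hp2, hpsum⟩ := Finset.mem_addAntidiagonal.1 hpS
    have hp1o : h.order ≤ p.1 := HahnSeries.order_le_of_coeff_ne_zero hp1
    have hp2o : g.order ≤ p.2 := HahnSeries.order_le_of_coeff_ne_zero hp2
    rcases lt_trichotomy p.2 j with hlt | heq | hgt
    · have IH := (good_aux2 h g hrel I E u v z hidem hcent huv hdec hE0 hIr hzh p.1 p.2).2
      exact hIr _ IH _
    · exfalso
      apply hpne
      have : p.1 = i := by omega
      exact Prod.ext this heq
    · have hp1lt : p.1 < i := by omega
      have IH := (good_aux2 h g hrel I E u v z hidem hcent huv hdec hE0 hIr hzh p.1 j).1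
      have e : (h.coeff p.1 * g.coeff p.2) * E (g.coeff j)
          = (h.coeff p.1 * E (g.coeff j)) * g.coeff p.2 := by
        rw [mul_assoc, ← hcent, ← mul_assoc]
      rw [e]
      exact hIr _ IH _
  have hEa : (h.coeff i * g.coeff j) * E (g.coeff j) ∈ I := by
    have hsum0 : ∑ p ∈ Finset.addAntidiagonal h.isPWO_support g.isPWO_support (i + j),
        (h.coeff p.1 * g.coeff p.2) * E (g.coeff j) = 0 := by
      rw [← Finset.sum_mul, hrel (i + j), zero_mul]
    have hsplit := Finset.add_sum_erase _
      (fun p : ℤ × ℤ => (h.coeff p.1 * g.coeff p.2) * E (g.coeff j)) hmem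
    rw [hsum0] at hsplit
    have h2 : (h.coeff i * g.coeff j) * E (g.coeff j)
        = - ∑ p ∈ (Finset.addAntidiagonal h.isPWO_support g.isPWO_support (i + j)).erase (i, j),
            (h.coeff p.1 * g.coeff p.2) * E (g.coeff j) := by
      simpa using eq_neg_of_add_eq_zero_left hsplit
    rw [h2]
    exact neg_mem (Submodule.sum_mem _ herase)
  set Ej := E (g.coeff j) with hEjdef
  set uj := u (g.coeff j) with hujdef
  set vj := v (g.coeff j) with hvjdef
  set zj := z (g.coeff j) with hzjdef
  have hd : g.coeff j = Ej * uj + zj := hdec _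
  have sw : Ej * uj = uj * Ej := hcent _ _
  have hzmem : (h.coeff i * zj) * Ej ∈ I := hIr _ (hzh i j) _
  have hEuh : h.coeff i * uj * Ej ∈ I := by
    have e : h.coeff i * uj * Ej
        = (h.coeff i * g.coeff j) * Ej - (h.coeff i * zj) * Ej := by
      rw [hd, sw]
      have e2 : (h.coeff i * (uj * Ej + zj)) * Ej
          = h.coeff i * uj * (Ej * Ej) + (h.coeff i * zj) * Ej := by noncomm_ring
      rw [e2, hidem]
      noncomm_ring
    rw [e]
    exact sub_mem hEa hzmem
  have hEh : h.coeff i * Ej ∈ I := by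
    have e : h.coeff i * Ej = (h.coeff i * uj * Ej) * vj := by
      calc h.coeff i * Ej = h.coeff i * Ej * (uj * vj) := by rw [huv, mul_one]
      _ = (h.coeff i * (Ej * uj)) * vj := by noncomm_ring
      _ = (h.coeff i * uj * Ej) * vj := by rw [sw, ← mul_assoc]
    rw [e]
    exact hIr _ hEuh _
  refine ⟨hEh, ?_⟩
  have e : h.coeff i * g.coeff j = h.coeff i * uj * Ej + h.coeff i * zj := by
    rw [hd, sw]; noncomm_ring
  rw [e]
  exact add_mem hEuh (hzh i j)
termination_by ((i + j - (h.order + g.order)).toNat, (j - g.order).toNat)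
decreasing_by
  · apply Prod.Lex.right' <;> omega
  · apply Prod.Lex.left; omega


section
variable {R : Type*} [Ring R]

private theorem exists_boundary {p : ℕ → Prop} {m : ℕ} (h0 : ¬ p 0) (hm : p m) :
    ∃ k, ¬ p k ∧ p (k + 1) := by
  induction m with
  | zero => exact absurd hm h0
  | succ n ih =>
    by_cases hn : p n
    · exact ih hn
    · exact ⟨n, hn, hm⟩

private theorem half1 {m : ℕ}
    (hnil : ∀ l : List R, l.length = m →
      (∀ x ∈ l, x ∈ (⊥ : Ideal R).jacobson) → l.prod = 0)
    (f h : HahnSeries ℤ R) (hh : h ≠ 0)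
    (E u v z : R → R)
    (hcent : ∀ a r, E a * r = r * E a)
    (hzJ : ∀ a, z a ∈ (⊥ : Ideal R).jacobson)
    (hdec : ∀ a, a = E a * u a + z a)
    (hbang : ∀ i j : ℤ, E (f.coeff i) * h.coeff j = 0) :
    ∃ c : R, c ≠ 0 ∧ ∀ n : ℤ, f.coeff n * c = 0 := by
  classical
  set NI : ℕ → Ideal R := fun k => Ideal.span {x | ∃ (l : List R) (jj : ℤ) (s : R),
    l.length = k ∧ (∀ y ∈ l, y ∈ (⊥ : Ideal R).jacobson) ∧ x = l.prod * h.coeff jj * s}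
    with hNI
  have hN0 : NI 0 ≠ ⊥ := by
    obtain ⟨j0, hj0⟩ := HahnSeries.support_nonempty_iff.2 hh
    rw [Submodule.ne_bot_iff]
    refine ⟨h.coeff j0, Ideal.subset_span ⟨[], j0, 1, rfl, by simp, by simp⟩, hj0⟩
  have hNm : NI m = ⊥ := by
    rw [hNI, eq_bot_iff, Ideal.span_le]
    rintro y ⟨l, jj, s, hlen, hmem, rfl⟩
    rw [hnil l hlen hmem, zero_mul, zero_mul]
    exact Submodule.zero_mem _
  have hNz : ∀ k, ∀ x ∈ NI k, ∀ w ∈ (⊥ : Ideal R).jacobson, w * x ∈ NI (k + 1) := by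
    intro k x hx
    refine Submodule.span_induction ?_ ?_ ?_ ?_ hx
    · rintro y ⟨l, jj, s, hlen, hmem, rfl⟩ w hw
      refine Ideal.subset_span ⟨w :: l, jj, s, by simp [hlen], ?_, by
        rw [List.prod_cons]; noncomm_ring⟩
      intro t ht
      rcases List.mem_cons.1 ht with h' | h'
      · exact h' ▸ hw
      · exact hmem t h'
    · intro w hw; rw [mul_zero]; exact Submodule.zero_mem _
    · intro p q hp hq ihp ihq w hw
      rw [mul_add]; exact Submodule.add_mem _ (ihp w hw) (ihq w hw)
    · intro r p hp ihp w hw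
      rw [smul_eq_mul, ← mul_assoc]
      exact ihp (w * r) (jac_mul_right hw r)
  have hNE : ∀ (ii : ℤ) (k : ℕ), ∀ x ∈ NI k, E (f.coeff ii) * x = 0 := by
    intro ii k x hx
    refine Submodule.span_induction ?_ ?_ ?_ ?_ hx
    · rintro y ⟨l, jj, s, hlen, hmem, rfl⟩
      have e1 : E (f.coeff ii) * (l.prod * h.coeff jj * s)
          = l.prod * (E (f.coeff ii) * h.coeff jj * s) := by
        calc E (f.coeff ii) * (l.prod * h.coeff jj * s)
            = (E (f.coeff ii) * l.prod) * (h.coeff jj * s) := by noncomm_ring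
        _ = (l.prod * E (f.coeff ii)) * (h.coeff jj * s) := by rw [hcent]
        _ = l.prod * (E (f.coeff ii) * h.coeff jj * s) := by noncomm_ring
      rw [e1, hbang]
      simp
    · rw [mul_zero]
    · intro p q hp hq ihp ihq
      rw [mul_add, ihp, ihq, add_zero]
    · intro r p hp ihp
      rw [smul_eq_mul, ← mul_assoc, hcent, mul_assoc, ihp, mul_zero]
  obtain ⟨k, hk, hk1⟩ := exists_boundary (p := fun k => NI k = ⊥) hN0 hNm
  obtain ⟨c, hcmem, hc0⟩ := Submodule.ne_bot_iff _ |>.1 hk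
  refine ⟨c, hc0, ?_⟩
  intro n
  rw [hdec (f.coeff n)]
  have e : (E (f.coeff n) * u (f.coeff n) + z (f.coeff n)) * c
      = E (f.coeff n) * (u (f.coeff n) * c) + z (f.coeff n) * c := by noncomm_ring
  rw [e]
  have h1 : E (f.coeff n) * (u (f.coeff n) * c) = 0 :=
    hNE n k _ (Ideal.mul_mem_left _ _ hcmem)
  have h2 : z (f.coeff n) * c = 0 := by
    have := hNz k c hcmem _ (hzJ (f.coeff n))
    rw [hk1] at this
    simpa using this
  rw [h1, h2, add_zero]

private theorem half2 {m : ℕ}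
    (hnil : ∀ l : List R, l.length = m →
      (∀ x ∈ l, x ∈ (⊥ : Ideal R).jacobson) → l.prod = 0)
    (g h : HahnSeries ℤ R) (hh : h ≠ 0)
    (E u v z : R → R)
    (hcent : ∀ a r, E a * r = r * E a)
    (hzJ : ∀ a, z a ∈ (⊥ : Ideal R).jacobson)
    (hdec : ∀ a, a = E a * u a + z a)
    (hbang : ∀ i j : ℤ, h.coeff i * E (g.coeff j) = 0) :
    ∃ d : R, d ≠ 0 ∧ ∀ n : ℤ, d * g.coeff n = 0 := by
  classical
  set NI : ℕ → Ideal R := fun k => Ideal.span {x | ∃ (ii : ℤ) (l : List R) (s : R),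
    l.length = k ∧ (∀ y ∈ l, y ∈ (⊥ : Ideal R).jacobson) ∧ x = h.coeff ii * l.prod * s}
    with hNI
  have hN0 : NI 0 ≠ ⊥ := by
    obtain ⟨i0, hi0⟩ := HahnSeries.support_nonempty_iff.2 hh
    rw [Submodule.ne_bot_iff]
    refine ⟨h.coeff i0, Ideal.subset_span ⟨i0, [], 1, rfl, by simp, by simp⟩, hi0⟩
  have hNm : NI m = ⊥ := by
    rw [hNI, eq_bot_iff, Ideal.span_le]
    rintro y ⟨ii, l, s, hlen, hmem, rfl⟩
    rw [hnil l hlen hmem, mul_zero, zero_mul]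
    exact Submodule.zero_mem _
  have hNr : ∀ k, ∀ x ∈ NI k, ∀ r : R, x * r ∈ NI k := by
    intro k x hx
    refine Submodule.span_induction ?_ ?_ ?_ ?_ hx
    · rintro y ⟨ii, l, s, hlen, hmem, rfl⟩ r
      exact Ideal.subset_span ⟨ii, l, s * r, hlen, hmem, by rw [mul_assoc, mul_assoc]⟩
    · intro r; rw [zero_mul]; exact Submodule.zero_mem _
    · intro p q hp hq ihp ihq r
      rw [add_mul]; exact Submodule.add_mem _ (ihp r) (ihq r)
    · intro c p hp ihp r
      rw [smul_eq_mul, mul_assoc]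
      exact Ideal.mul_mem_left _ _ (ihp r)
  have hNz : ∀ k, ∀ x ∈ NI k, ∀ w ∈ (⊥ : Ideal R).jacobson, x * w ∈ NI (k + 1) := by
    intro k x hx
    refine Submodule.span_induction ?_ ?_ ?_ ?_ hx
    · rintro y ⟨ii, l, s, hlen, hmem, rfl⟩ w hw
      refine Ideal.subset_span ⟨ii, l ++ [s * w], 1, by simp [hlen], ?_, ?_⟩
      · intro t ht
        rcases List.mem_append.1 ht with h' | h'
        · exact hmem t h'
        · rw [List.mem_singleton.1 h']; exact Ideal.mul_mem_left _ _ hw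
      · rw [List.prod_append, List.prod_singleton, mul_one]
        noncomm_ring
    · intro w hw; rw [zero_mul]; exact Submodule.zero_mem _
    · intro p q hp hq ihp ihq w hw
      rw [add_mul]; exact Submodule.add_mem _ (ihp w hw) (ihq w hw)
    · intro c p hp ihp w hw
      rw [smul_eq_mul, mul_assoc]
      exact Ideal.mul_mem_left _ _ (ihp w hw)
  have hNE : ∀ (jj : ℤ) (k : ℕ), ∀ x ∈ NI k, x * E (g.coeff jj) = 0 := by
    intro jj k x hx
    refine Submodule.span_induction ?_ ?_ ?_ ?_ hx
    · rintro y ⟨ii, l, s, hlen, hmem, rfl⟩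
      have e1 : (h.coeff ii * l.prod * s) * E (g.coeff jj)
          = (h.coeff ii * E (g.coeff jj)) * (l.prod * s) := by
        calc (h.coeff ii * l.prod * s) * E (g.coeff jj)
            = h.coeff ii * (l.prod * (s * E (g.coeff jj))) := by noncomm_ring
        _ = h.coeff ii * (l.prod * (E (g.coeff jj) * s)) := by rw [← hcent _ s]
        _ = h.coeff ii * ((l.prod * E (g.coeff jj)) * s) := by noncomm_ring
        _ = h.coeff ii * ((E (g.coeff jj) * l.prod) * s) := by rw [← hcent _ l.prod]
        _ = (h.coeff ii * E (g.coeff jj)) * (l.prod * s) := by noncomm_ring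
      rw [e1, hbang]
      simp
    · rw [zero_mul]
    · intro p q hp hq ihp ihq
      rw [add_mul, ihp, ihq, add_zero]
    · intro r p hp ihp
      rw [smul_eq_mul, mul_assoc, ihp, mul_zero]
  obtain ⟨k, hk, hk1⟩ := exists_boundary (p := fun k => NI k = ⊥) hN0 hNm
  obtain ⟨d, hdmem, hd0⟩ := Submodule.ne_bot_iff _ |>.1 hk
  refine ⟨d, hd0, ?_⟩
  intro n
  rw [hdec (g.coeff n)]
  have e : d * (E (g.coeff n) * u (g.coeff n) + z (g.coeff n))
      = (d * u (g.coeff n)) * E (g.coeff n) + d * z (g.coeff n) := by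
    rw [hcent (g.coeff n) (u (g.coeff n))]
    noncomm_ring
  rw [e]
  have h1 : (d * u (g.coeff n)) * E (g.coeff n) = 0 :=
    hNE n k _ (hNr k d hdmem _)
  have h2 : d * z (g.coeff n) = 0 := by
    have := hNz k d hdmem _ (hzJ (g.coeff n))
    rw [hk1] at this
    simpa using this
  rw [h1, h2, add_zero]

end

/-- Let `R` be an abelian semi-regular ring with `J(R)` nilpotent.  Then the Laurent series
ring `R[[x, x⁻¹]]` (Hahn series over `ℤ`) is McCoy over `R`: if `f * g = 0` with `f, g ≠ 0`,
then some non-zero `c ∈ R` annihilates `f` on the right and some non-zero `d ∈ R`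
annihilates `g` on the left. -/
theorem laurentSeries_mccoy (R : Type*) [Ring R]
    (hab : IsAbelianRing R) (hsr : IsSemiregularRing R) (hnil : JacobsonNilpotent R)
    (f g : HahnSeries ℤ R) (hf : f ≠ 0) (hg : g ≠ 0) (hfg : f * g = 0) :
    (∃ c : R, c ≠ 0 ∧ ∀ n : ℤ, f.coeff n * c = 0) ∧
    (∃ d : R, d ≠ 0 ∧ ∀ n : ℤ, d * g.coeff n = 0) := by
  classical
  obtain ⟨m, hm, hnil⟩ := hnil
  choose E u v z hidem hcent hvu huv hzJ hdec hzero using decomp hab hsr hm hnil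
  have hE0 : E 0 = 0 := hzero 0 rfl
  constructor
  · -- right annihilator of f
    set P : ℕ → Prop := fun t => ∃ h : HahnSeries ℤ R, f * h = 0 ∧ h ≠ 0 ∧
      ∀ jj : ℤ, h.coeff jj ∈ Jpow R t with hP
    have hP0 : P 0 := ⟨g, hfg, hg, fun jj => Jpow_zero _⟩
    have hPm : ¬ P m := by
      rintro ⟨h, -, hne, hco⟩
      exact hne (HahnSeries.coeff_fun_eq_zero_iff.1
        (funext fun jj => Jpow_top_eq_zero hnil (hco jj)))
    obtain ⟨t, ht, htlt, hmax⟩ : ∃ t, P t ∧ t < m ∧ ¬ P (t + 1) := by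
      have ht : P (Nat.findGreatest P m) := Nat.findGreatest_spec (Nat.zero_le m) hP0
      have htlt : Nat.findGreatest P m < m :=
        lt_of_le_of_ne (Nat.findGreatest_le m) (fun he => hPm (he ▸ ht))
      exact ⟨_, ht, htlt, Nat.findGreatest_is_greatest (Nat.lt_succ_self _) htlt⟩
    obtain ⟨h, hfh, hhne, hco⟩ := ht
    have hrel : ∀ n : ℤ, ∑ ij ∈ Finset.addAntidiagonal f.isPWO_support h.isPWO_support n,
        f.coeff ij.1 * h.coeff ij.2 = 0 := by
      intro n
      have h0 : (f * h).coeff n = 0 := by rw [hfh]; simp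
      rwa [HahnSeries.coeff_mul] at h0
    have hzh : ∀ i j : ℤ, z (f.coeff i) * h.coeff j ∈ Jpow R (t + 1) :=
      fun i j => Jpow_left_mul (hco j) _ (hzJ _)
    have good := good_aux f h hrel (Jpow R (t + 1)) E u v z
      (fun a => (hidem a).eq) hcent hvu hdec hE0 hzh
    have hbang : ∀ i j : ℤ, E (f.coeff i) * h.coeff j = 0 := by
      intro i j
      have hint : f * (h * HahnSeries.single 0 (E (f.coeff i))) = 0 := by
        rw [← mul_assoc, hfh, zero_mul]
      have hco' : ∀ jj : ℤ, (h * HahnSeries.single 0 (E (f.coeff i))).coeff jj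
          ∈ Jpow R (t + 1) := by
        intro jj
        rw [HahnSeries.coeff_mul_single_zero]
        have h1 := (good i jj).1
        rwa [hcent] at h1
      have hzero' : h * HahnSeries.single 0 (E (f.coeff i)) = 0 := by
        by_contra hne'
        exact hmax ⟨_, hint, hne', hco'⟩
      have h2 := congrArg (fun s : HahnSeries ℤ R => s.coeff j) hzero'
      simp only [HahnSeries.coeff_mul_single_zero, HahnSeries.coeff_zero] at h2
      rw [hcent]; exact h2
    exact half1 hnil f h hhne E u v z hcent hzJ hdec hbang
  · -- left annihilator of g
    set P : ℕ → Prop := fun t => ∃ h : HahnSeries ℤ R, h * g = 0 ∧ h ≠ 0 ∧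
      ∀ ii : ℤ, h.coeff ii ∈ Jpow R t with hP
    have hP0 : P 0 := ⟨f, hfg, hf, fun ii => Jpow_zero _⟩
    have hPm : ¬ P m := by
      rintro ⟨h, -, hne, hco⟩
      exact hne (HahnSeries.coeff_fun_eq_zero_iff.1
        (funext fun ii => Jpow_top_eq_zero hnil (hco ii)))
    obtain ⟨t, ht, htlt, hmax⟩ : ∃ t, P t ∧ t < m ∧ ¬ P (t + 1) := by
      have ht : P (Nat.findGreatest P m) := Nat.findGreatest_spec (Nat.zero_le m) hP0
      have htlt : Nat.findGreatest P m < m :=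
        lt_of_le_of_ne (Nat.findGreatest_le m) (fun he => hPm (he ▸ ht))
      exact ⟨_, ht, htlt, Nat.findGreatest_is_greatest (Nat.lt_succ_self _) htlt⟩
    obtain ⟨h, hhg, hhne, hco⟩ := ht
    have hrel : ∀ n : ℤ, ∑ ij ∈ Finset.addAntidiagonal h.isPWO_support g.isPWO_support n,
        h.coeff ij.1 * g.coeff ij.2 = 0 := by
      intro n
      have h0 : (h * g).coeff n = 0 := by rw [hhg]; simp
      rwa [HahnSeries.coeff_mul] at h0
    have hzh : ∀ i j : ℤ, h.coeff i * z (g.coeff j) ∈ Jpow R (t + 1) :=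
      fun i j => Jpow_mul_right_jac (hco i) _ (hzJ _)
    have good := good_aux2 h g hrel (Jpow R (t + 1)) E u v z
      (fun a => (hidem a).eq) hcent huv hdec hE0
      (fun x hx r => Jpow_mul_right hx r) hzh
    have hbang : ∀ i j : ℤ, h.coeff i * E (g.coeff j) = 0 := by
      intro i j
      have hint : (HahnSeries.single 0 (E (g.coeff j)) * h) * g = 0 := by
        rw [mul_assoc, hhg, mul_zero]
      have hco' : ∀ ii : ℤ, (HahnSeries.single 0 (E (g.coeff j)) * h).coeff ii
          ∈ Jpow R (t + 1) := by
        intro ii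
        rw [HahnSeries.coeff_single_zero_mul, hcent]
        exact (good ii j).1
      have hzero' : HahnSeries.single 0 (E (g.coeff j)) * h = 0 := by
        by_contra hne'
        exact hmax ⟨_, hint, hne', hco'⟩
      have h2 := congrArg (fun s : HahnSeries ℤ R => s.coeff i) hzero'
      simp only [HahnSeries.coeff_single_zero_mul, HahnSeries.coeff_zero] at h2
      rw [← hcent]; exact h2
    exact half2 hnil g h hhne E u v z hcent hzJ hdec hbang
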